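/- If Q_h is L²-stable with constant C₀, the L²-orthogonal projection P_h onto S_h is H¹-stable with constant C₁, and the inverse inequality |w_h|_{H¹(Ω)} ≤ C₂ h⁻¹ ‖w_h‖_{L²(Ω)} holds on S_h, then Q_h is H¹-stable: there is a constant C, depending only on C₀, C₁, C₂ and the approximation constant of P_h, such that |Q_h w|_{H¹(Ω)} ≤ C |w|_{H¹(Ω)} for all w ∈ H¹(Ω). -/

import Mathlib

/-- H¹-stability of the quasi-projection `Q_h`, deduced from its L²-stability, the
H¹-stability and L²-approximation property of the orthogonal projection `P_h`, and the
inverse inequality on `S_h`.  Here `H` plays the role of `L²(Ω)`, `S` of the finite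
element space `S_h`, and the seminorm `s` of the `H¹(Ω)`-seminorm. -/
theorem quasi_projection_H1_stability
    {H : Type*} [NormedAddCommGroup H] [InnerProductSpace ℝ H]
    (S : Submodule ℝ H) (s : Seminorm ℝ H)
    (h C₀ C₁ C₂ C₃ : ℝ) (hh : 0 < h)
    (hC₀ : 0 < C₀) (hC₁ : 0 < C₁) (hC₂ : 0 < C₂) (hC₃ : 0 < C₃)
    (Q P : H →ₗ[ℝ] H)
    (hQrange : ∀ v : H, Q v ∈ S) (hPrange : ∀ v : H, P v ∈ S)
    (hQid : ∀ v ∈ S, Q v = v)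
    (hQL2 : ∀ v : H, ‖Q v‖ ≤ C₀ * ‖v‖)
    (hPH1 : ∀ w : H, s (P w) ≤ C₁ * s w)
    (hinv : ∀ v ∈ S, s v ≤ C₂ / h * ‖v‖)
    (happrox : ∀ w : H, ‖w - P w‖ ≤ C₃ * h * s w) :
    ∃ C : ℝ, 0 < C ∧ C = C₀ * C₂ * C₃ + C₁ ∧ ∀ w : H, s (Q w) ≤ C * s w := by
  refine ⟨C₀ * C₂ * C₃ + C₁, by positivity, rfl, fun w => ?_⟩
  have hsplit : Q w = Q (w - P w) + P w := by
    have : Q (P w) = P w := hQid _ (hPrange w)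
    rw [map_sub, this]; abel
  have h1 : s (Q (w - P w)) ≤ C₀ * C₂ * C₃ * s w := by
    calc s (Q (w - P w)) ≤ C₂ / h * ‖Q (w - P w)‖ := hinv _ (hQrange _)
      _ ≤ C₂ / h * (C₀ * ‖w - P w‖) := by
          apply mul_le_mul_of_nonneg_left (hQL2 _) (by positivity)
      _ ≤ C₂ / h * (C₀ * (C₃ * h * s w)) := by
          apply mul_le_mul_of_nonneg_left
            (mul_le_mul_of_nonneg_left (happrox w) hC₀.le) (by positivity)
      _ = C₀ * C₂ * C₃ * s w := by field_simp
  calc s (Q w) ≤ s (Q (w - P w)) + s (P w) := by rw [hsplit]; exact map_add_le_add s _ _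
    _ ≤ C₀ * C₂ * C₃ * s w + C₁ * s w := add_le_add h1 (hPH1 w)
    _ = (C₀ * C₂ * C₃ + C₁) * s w := by ring
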